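/- Let R be a ring and M an endonoetherian right R-module. Then M satisfies the ascending chain condition on direct summands: for every ascending chain M_1 ⊆ M_2 ⊆ ⋯ of submodules of M in which each M_i is a direct summand of M, there exists n such that M_k = M_n for all k ≥ n. -/

import Mathlib

/-- A module `M` over a ring `S` is *endonoetherian* if every ascending chain of kernels of
module endomorphisms of `M` stabilizes.  (A right `R`-module is treated as a module over
`Rᵐᵒᵖ`.) -/
def IsEndonoetherian (S M : Type*) [Ring S] [AddCommGroup M] [Module S M] : Prop :=
  ∀ f : ℕ → M →ₗ[S] M,
    (∀ n, LinearMap.ker (f n) ≤ LinearMap.ker (f (n + 1))) →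
    ∃ n, ∀ k, n ≤ k → LinearMap.ker (f k) = LinearMap.ker (f n)

/-- An endonoetherian right `R`-module satisfies the ascending chain condition on direct
summands. -/
theorem isEndonoetherian_acc_directSummands (R M : Type*) [Ring R] [AddCommGroup M]
    [Module Rᵐᵒᵖ M] (hM : IsEndonoetherian Rᵐᵒᵖ M) (Ms : ℕ → Submodule Rᵐᵒᵖ M)
    (hsumm : ∀ i, ∃ L : Submodule Rᵐᵒᵖ M, Ms i ⊓ L = ⊥ ∧ Ms i ⊔ L = ⊤)
    (hasc : ∀ i, Ms i ≤ Ms (i + 1)) :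
    ∃ n, ∀ k, n ≤ k → Ms k = Ms n := by
  choose L hL1 hL2 using hsumm
  have hc : ∀ i, IsCompl (L i) (Ms i) := fun i =>
    ⟨disjoint_iff.2 (by rw [inf_comm]; exact hL1 i), codisjoint_iff.2 (by rw [sup_comm]; exact hL2 i)⟩
  set f : ℕ → M →ₗ[Rᵐᵒᵖ] M := fun i =>
    (L i).subtype.comp (Submodule.projectionOnto (L i) (Ms i) (hc i)) with hf
  have hker : ∀ i, LinearMap.ker (f i) = Ms i := by
    intro i
    rw [hf, LinearMap.ker_comp, Submodule.ker_subtype, Submodule.comap_bot,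
      Submodule.linearProjOfIsCompl_ker]
  obtain ⟨n, hn⟩ := hM f (fun n => by rw [hker, hker]; exact hasc n)
  exact ⟨n, fun k hk => by rw [← hker, ← hker, hn k hk]⟩
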